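/- Each component of the Laplace–Runge–Lenz vector A = p × J − q/‖q‖ Poisson-commutes with the Kepler Hamiltonian h(q,p) = ‖p‖²/2 − 1/‖q‖, i.e. {Aⁱ, h} = 0 for i = 1,2,3. -/

import Mathlib

noncomputable section

abbrev R3 := Fin 3 → ℝ

def dot3 (a b : R3) : ℝ := a 0 * b 0 + a 1 * b 1 + a 2 * b 2
def norm3 (a : R3) : ℝ := Real.sqrt (dot3 a a)
def cross3 (a b : R3) : R3 :=
  ![a 1 * b 2 - a 2 * b 1, a 2 * b 0 - a 0 * b 2, a 0 * b 1 - a 1 * b 0]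

/-- Kepler Hamiltonian. -/
def keplerH (q p : R3) : ℝ := norm3 p ^ 2 / 2 - 1 / norm3 q
/-- Components of the angular momentum `J = q × p`. -/
def Jc (i : Fin 3) (q p : R3) : ℝ := cross3 q p i
/-- Laplace–Runge–Lenz vector `A = p × J − q/‖q‖`. -/
def LRL (q p : R3) : R3 := fun i => cross3 p (cross3 q p) i - q i / norm3 q

/-- Partial derivative in `qⁱ`. -/
def pdq (f : R3 → R3 → ℝ) (i : Fin 3) (q p : R3) : ℝ :=
  deriv (fun t => f (Function.update q i t) p) (q i)
/-- Partial derivative in `pᵢ`. -/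
def pdp (f : R3 → R3 → ℝ) (i : Fin 3) (q p : R3) : ℝ :=
  deriv (fun t => f q (Function.update p i t)) (p i)
/-- Canonical Poisson bracket. -/
def poisson (f g : R3 → R3 → ℝ) (q p : R3) : ℝ :=
  ∑ i : Fin 3, (pdq f i q p * pdp g i q p - pdp f i q p * pdq g i q p)

/-- Levi-Civita symbol on `Fin 3`. -/
def eps (i j k : Fin 3) : ℝ :=
  if (i = 0 ∧ j = 1 ∧ k = 2) ∨ (i = 1 ∧ j = 2 ∧ k = 0) ∨ (i = 2 ∧ j = 0 ∧ k = 1) then 1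
  else if (i = 0 ∧ j = 2 ∧ k = 1) ∨ (i = 2 ∧ j = 1 ∧ k = 0) ∨ (i = 1 ∧ j = 0 ∧ k = 2) then -1
  else 0

lemma dot3_self_nonneg (a : R3) : 0 ≤ dot3 a a := by
  unfold dot3; nlinarith [sq_nonneg (a 0), sq_nonneg (a 1), sq_nonneg (a 2)]

lemma dot3_self_pos {a : R3} (h : a ≠ 0) : 0 < dot3 a a := by
  rcases Function.ne_iff.mp h with ⟨i, hi⟩
  unfold dot3
  fin_cases i <;> simp at hi <;>
    nlinarith [sq_nonneg (a 0), sq_nonneg (a 1), sq_nonneg (a 2),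
      mul_self_pos.mpr hi]

lemma norm3_pos {a : R3} (h : a ≠ 0) : 0 < norm3 a :=
  Real.sqrt_pos.mpr (dot3_self_pos h)

lemma norm3_sq (a : R3) : norm3 a ^ 2 = dot3 a a :=
  Real.sq_sqrt (dot3_self_nonneg a)

lemma upd_eval (q : R3) (j k : Fin 3) (t : ℝ) :
    Function.update q j t k = if k = j then t else q k := by
  by_cases h : k = j
  · subst h; simp
  · simp [Function.update_of_ne h, h]

lemma hd_dot_left (q v : R3) (j : Fin 3) (x : ℝ) :
    HasDerivAt (fun t => dot3 (Function.update q j t) v) (v j) x := by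
  simp only [dot3, upd_eval]
  fin_cases j <;> simp
  · simpa using (((hasDerivAt_id x).mul_const (v 0)).add_const (q 1 * v 1)).add_const (q 2 * v 2)
  · simpa using ((((hasDerivAt_id x).mul_const (v 1)).const_add (q 0 * v 0))).add_const (q 2 * v 2)
  · simpa using (((hasDerivAt_id x).mul_const (v 2)).const_add (q 0 * v 0 + q 1 * v 1))

lemma hd_dot_right (q v : R3) (j : Fin 3) (x : ℝ) :
    HasDerivAt (fun t => dot3 v (Function.update q j t)) (v j) x := by
  simp only [dot3, upd_eval]
  fin_cases j <;> simp
  · simpa using ((((hasDerivAt_id x).const_mul (v 0)).add_const (v 1 * q 1))).add_const (v 2 * q 2)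
  · simpa using ((((hasDerivAt_id x).const_mul (v 1)).const_add (v 0 * q 0))).add_const (v 2 * q 2)
  · simpa using (((hasDerivAt_id x).const_mul (v 2)).const_add (v 0 * q 0 + v 1 * q 1))

lemma hd_dot_self (q : R3) (j : Fin 3) (x : ℝ) :
    HasDerivAt (fun t => dot3 (Function.update q j t) (Function.update q j t)) (2 * x) x := by
  simp only [dot3, upd_eval]
  fin_cases j <;> simp
  · have := ((((hasDerivAt_id x).mul (hasDerivAt_id x)).add_const (q 1 * q 1))).add_const (q 2 * q 2)
    simpa [two_mul] using this
  · have := ((((hasDerivAt_id x).mul (hasDerivAt_id x)).const_add (q 0 * q 0))).add_const (q 2 * q 2)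
    simpa [two_mul] using this
  · have := (((hasDerivAt_id x).mul (hasDerivAt_id x)).const_add (q 0 * q 0 + q 1 * q 1))
    simpa [two_mul] using this

lemma hd_norm3 (q : R3) (j : Fin 3) (x : ℝ)
    (h : dot3 (Function.update q j x) (Function.update q j x) ≠ 0) :
    HasDerivAt (fun t => norm3 (Function.update q j t))
      (x / norm3 (Function.update q j x)) x := by
  have hpos : 0 < dot3 (Function.update q j x) (Function.update q j x) :=
    lt_of_le_of_ne (dot3_self_nonneg _) (Ne.symm h)
  have hs : Real.sqrt (dot3 (Function.update q j x) (Function.update q j x)) ≠ 0 :=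
    ne_of_gt (Real.sqrt_pos.mpr hpos)
  have := (hd_dot_self q j x).sqrt h
  unfold norm3
  convert this using 1
  field_simp

def kd (i j : Fin 3) : ℝ := if i = j then 1 else 0

lemma LRL_eq (q p : R3) (i : Fin 3) :
    LRL q p i = dot3 p p * q i - dot3 q p * p i - q i / norm3 q := by
  fin_cases i <;> simp [LRL, cross3, dot3] <;> ring

lemma pdq_H (q p : R3) (hq : q ≠ 0) (j : Fin 3) :
    pdq keplerH j q p = q j / norm3 q ^ 3 := by
  have hd : dot3 (Function.update q j (q j)) (Function.update q j (q j)) ≠ 0 := by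
    rw [Function.update_eq_self]; exact ne_of_gt (dot3_self_pos hq)
  have hr : norm3 q ≠ 0 := ne_of_gt (norm3_pos hq)
  have hr' : norm3 (Function.update q j (q j)) ≠ 0 := by
    rw [Function.update_eq_self]; exact hr
  have hn := hd_norm3 q j (q j) hd
  have := (hasDerivAt_const (q j) (norm3 p ^ 2 / 2)).sub
      ((hasDerivAt_const (q j) (1:ℝ)).div hn hr')
  simp only [Function.update_eq_self] at this
  unfold pdq keplerH
  erw [this.deriv]
  field_simp
  ring

lemma pdp_H (q p : R3) (j : Fin 3) : pdp keplerH j q p = p j := by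
  unfold pdp keplerH
  simp only [norm3_sq]
  have := ((hd_dot_self p j (p j)).div_const 2).sub_const (1 / norm3 q)
  rw [this.deriv]
  ring

lemma pdq_A (q p : R3) (hq : q ≠ 0) (i j : Fin 3) :
    pdq (fun q p => dot3 p p * q i - dot3 q p * p i - q i / norm3 q) j q p =
      dot3 p p * kd i j - p j * p i - (kd i j / norm3 q - q i * q j / norm3 q ^ 3) := by
  have hd : dot3 (Function.update q j (q j)) (Function.update q j (q j)) ≠ 0 := by
    rw [Function.update_eq_self]; exact ne_of_gt (dot3_self_pos hq)
  have hr : norm3 q ≠ 0 := ne_of_gt (norm3_pos hq)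
  have hr' : norm3 (Function.update q j (q j)) ≠ 0 := by
    rw [Function.update_eq_self]; exact hr
  have hn := hd_norm3 q j (q j) hd
  unfold pdq
  by_cases hij : i = j
  · subst hij
    simp only [Function.update_self]
    have h1 := (hasDerivAt_id (q i)).const_mul (dot3 p p)
    have h2 := (hd_dot_left q p i (q i)).mul_const (p i)
    have h3 := (hasDerivAt_id (q i)).div hn hr'
    have := (h1.sub h2).sub h3
    simp only [Function.update_eq_self, id_eq] at this
    erw [this.deriv]
    simp only [kd, if_pos rfl, ↓reduceIte]
    field_simp
  · simp only [upd_eval, if_neg hij]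
    have h2 := (hd_dot_left q p j (q j)).mul_const (p i)
    have h3 := (hasDerivAt_const (q j) (q i)).div hn hr'
    have := ((hasDerivAt_const (q j) (dot3 p p * q i)).sub h2).sub h3
    simp only [Function.update_eq_self] at this
    erw [this.deriv]
    simp only [kd, if_neg hij]
    field_simp
    ring

lemma pdp_A (q p : R3) (i j : Fin 3) :
    pdp (fun q p => dot3 p p * q i - dot3 q p * p i - q i / norm3 q) j q p =
      2 * p j * q i - (q j * p i + dot3 q p * kd i j) := by
  unfold pdp
  have h1 := (hd_dot_self p j (p j)).mul_const (q i)
  have hupd : HasDerivAt (fun t => (dot3 q (Function.update p j t)) * (Function.update p j t i))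
      (q j * p i + dot3 q p * kd i j) (p j) := by
    by_cases hij : i = j
    · subst hij
      have := (hd_dot_right p q i (p i)).mul (hasDerivAt_id (p i))
      simp only [Function.update_eq_self] at this
      simp only [Function.update_self, kd, if_pos rfl]
      exact this
    · have := (hd_dot_right p q j (p j)).mul_const (p i)
      simp only [upd_eval, if_neg hij, kd]
      simpa using this
  have := (h1.sub hupd).sub_const (q i / norm3 q)
  erw [this.deriv]


theorem stmt3 (q p : R3) (hq : q ≠ 0) (i : Fin 3) :
    poisson (fun q p => LRL q p i) keplerH q p = 0 := by
  have hfe : (fun q p => LRL q p i) =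
      (fun q p : R3 => dot3 p p * q i - dot3 q p * p i - q i / norm3 q) := by
    funext q p; exact LRL_eq q p i
  rw [hfe]
  have hr : norm3 q ≠ 0 := ne_of_gt (norm3_pos hq)
  have hr2 : norm3 q ^ 2 = dot3 q q := norm3_sq q
  unfold poisson
  rw [Fin.sum_univ_three]
  rw [pdq_A q p hq i 0, pdq_A q p hq i 1, pdq_A q p hq i 2,
      pdp_A q p i 0, pdp_A q p i 1, pdp_A q p i 2,
      pdq_H q p hq 0, pdq_H q p hq 1, pdq_H q p hq 2,
      pdp_H q p 0, pdp_H q p 1, pdp_H q p 2]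
  have hpp : dot3 p p = p 0 * p 0 + p 1 * p 1 + p 2 * p 2 := rfl
  have hqp : dot3 q p = q 0 * p 0 + q 1 * p 1 + q 2 * p 2 := rfl
  have hqq : dot3 q q = q 0 * q 0 + q 1 * q 1 + q 2 * q 2 := rfl
  rw [hqq] at hr2
  fin_cases i <;> simp [kd] <;> rw [hpp, hqp] <;> field_simp
  · linear_combination (- p 0) * hr2
  · linear_combination (- p 1) * hr2
  · linear_combination (- p 2) * hr2
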